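/- Let H be a p-dimensional Hilbert space, D a disjoint union of N orthonormal bases of H, and S an injective map from a set V into D. Let γ be a closed strict path on V, v a vertex crossed exactly once by γ with distinct neighbors v_l, v_r, and γ_v̂ the path obtained by deleting v. Then summing the path weight over all choices of the image of v ranging over all of D gives Σ_{b ∈ D} w_γ(S ⊔ b) = N · w_{γ_v̂}(S), where S ⊔ b extends S by sending v to b. -/

import Mathlib

open scoped InnerProductSpace

/-- The weight of a path `γ` of length `k` on a vertex set `V` under an assignment
`T : V → H` of vectors. -/
noncomputable def pathWeight {V H : Type*} [NormedAddCommGroup H] [InnerProductSpace ℂ H]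
    {k : ℕ} (γ : Fin (k + 1) → V) (T : V → H) : ℂ :=
  ∏ j : Fin k, ⟪T (γ j.castSucc), T (γ j.succ)⟫_ℂ

/-- The path `γ_v̂` of length `k−1` obtained from `γ` (of length `k = m+1`) by deleting the
vertex at position `i₀`, connecting its neighbors directly. -/
def deleteVertex {V : Type*} {m : ℕ} (γ : Fin (m + 2) → V) (i₀ : ℕ) :
    Fin (m + 1) → V :=
  fun j => if (j : ℕ) < i₀ then γ j.castSucc else γ j.succ

/-- Extend an assignment `S` by sending the vertex `v` to the vector `b`. -/
def extendAt {V H : Type*} [DecidableEq V] (v : V) (S : V → H) (b : H) : V → H :=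
  fun u => if u = v then b else S u

private lemma split_prod {M : Type*} [CommMonoid M] (f : ℕ → M) (m i₀ : ℕ)
    (h0 : 0 < i₀) (hk : i₀ < m + 1) :
    ∏ j ∈ Finset.range (m + 1), f j =
      ((∏ j ∈ Finset.range (i₀ - 1), f j) * (f (i₀ - 1) * f i₀)) *
        ∏ j ∈ Finset.Ico (i₀ + 1) (m + 1), f j := by
  obtain ⟨n, rfl⟩ : ∃ n, i₀ = n + 1 := ⟨i₀ - 1, by omega⟩
  rw [← Finset.prod_range_mul_prod_Ico f (show n + 1 + 1 ≤ m + 1 by omega),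
    Finset.prod_range_succ, Finset.prod_range_succ]
  simp [mul_assoc]

private lemma split_prod' {M : Type*} [CommMonoid M] (f : ℕ → M) (m i₀ : ℕ)
    (h0 : 0 < i₀) (hk : i₀ ≤ m) :
    ∏ j ∈ Finset.range m, f j =
      ((∏ j ∈ Finset.range (i₀ - 1), f j) * f (i₀ - 1)) *
        ∏ j ∈ Finset.Ico i₀ m, f j := by
  obtain ⟨n, rfl⟩ : ∃ n, i₀ = n + 1 := ⟨i₀ - 1, by omega⟩
  rw [← Finset.prod_range_mul_prod_Ico f hk, Finset.prod_range_succ]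
  simp


/-- Let `H` be a `p`-dimensional Hilbert space, `D = ⊔_{x∈X} B_x` a disjoint union of `N`
orthonormal bases of `H`, `γ` a closed strict path on `V`, `v` a vertex crossed exactly once
by `γ` with distinct neighbors, and `S` an injective map of `V∖{v}` into `D`. Then summing
the path weight over all choices `b ∈ D` for the image of `v` gives
`Σ_{b∈D} w_γ(S ⊔ b) = N · w_{γ_v̂}(S)`. -/
theorem stmt_11 (p m : ℕ) (X V : Type*) [Fintype X] [DecidableEq V]
    (B : X → OrthonormalBasis (Fin p) ℂ (EuclideanSpace ℂ (Fin p)))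
    (γ : Fin (m + 2) → V)
    (hclosed : γ 0 = γ (Fin.last (m + 1)))
    (hstrict : ∀ j : Fin (m + 1), γ j.castSucc ≠ γ j.succ)
    (i₀ : ℕ) (h0 : 0 < i₀) (hk : i₀ < m + 1)
    (v : V) (hv : γ ⟨i₀, by omega⟩ = v)
    (honce : ∀ j : Fin (m + 2), γ j = v → (j : ℕ) = i₀)
    (hlr : γ ⟨i₀ - 1, by omega⟩ ≠ γ ⟨i₀ + 1, by omega⟩)
    (S : V → EuclideanSpace ℂ (Fin p))
    (hinj : Set.InjOn S {u | u ≠ v})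
    (hmem : ∀ u, u ≠ v → ∃ x i, S u = B x i) :
    ∑ x : X, ∑ i : Fin p, pathWeight γ (extendAt v S (B x i)) =
      (Fintype.card X : ℂ) * pathWeight (deleteVertex γ i₀) S := by
  classical
  -- extend γ to ℕ
  set γn : ℕ → V := fun j => if h : j < m + 2 then γ ⟨j, h⟩ else v with hγn
  have hγn' : ∀ (j : Fin (m + 2)), γ j = γn (j : ℕ) := by
    intro j; simp only [hγn, j.isLt, dif_pos]
  have hne : ∀ j, j < m + 2 → j ≠ i₀ → γn j ≠ v := by
    intro j hj hji hcon
    apply hji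
    have := honce ⟨j, hj⟩
    simp only [hγn, dif_pos hj] at hcon
    exact this hcon
  have hvn : γn i₀ = v := by
    simp only [hγn, dif_pos (show i₀ < m + 2 by omega)]; exact hv
  set F : ℕ → ℂ := fun j => ⟪S (γn j), S (γn (j + 1))⟫_ℂ with hF
  have hT : ∀ (b : EuclideanSpace ℂ (Fin p)) j, j < m + 2 → j ≠ i₀ →
      extendAt v S b (γn j) = S (γn j) := by
    intro b j hj hji
    simp only [extendAt, if_neg (hne j hj hji)]
  have hTv : ∀ (b : EuclideanSpace ℂ (Fin p)), extendAt v S b (γn i₀) = b := by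
    intro b; simp [extendAt, hvn]
  -- pathWeight of γ under extendAt
  have hPW : ∀ (b : EuclideanSpace ℂ (Fin p)),
      pathWeight γ (extendAt v S b) =
        ((∏ j ∈ Finset.range (i₀ - 1), F j) *
          (⟪S (γn (i₀ - 1)), b⟫_ℂ * ⟪b, S (γn (i₀ + 1))⟫_ℂ)) *
          ∏ j ∈ Finset.Ico (i₀ + 1) (m + 1), F j := by
    intro b
    have h1 : pathWeight γ (extendAt v S b) =
        ∏ j ∈ Finset.range (m + 1),
          ⟪extendAt v S b (γn j), extendAt v S b (γn (j + 1))⟫_ℂ := by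
      rw [pathWeight, ← Fin.prod_univ_eq_prod_range]
      refine Finset.prod_congr rfl fun j _ => ?_
      rw [hγn' j.castSucc, hγn' j.succ, Fin.coe_castSucc, Fin.val_succ]
    rw [h1, split_prod _ m i₀ h0 hk]
    congr 1
    congr 1
    · refine Finset.prod_congr rfl fun j hj => ?_
      simp only [Finset.mem_range] at hj
      rw [hT b j (by omega) (by omega), hT b (j + 1) (by omega) (by omega)]
    · rw [hT b (i₀ - 1) (by omega) (by omega),
        show i₀ - 1 + 1 = i₀ by omega, hTv b,
        hT b (i₀ + 1) (by omega) (by omega)]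
    · refine Finset.prod_congr rfl fun j hj => ?_
      simp only [Finset.mem_Ico] at hj
      rw [hT b j (by omega) (by omega), hT b (j + 1) (by omega) (by omega)]
  -- pathWeight of the deleted path
  set δn : ℕ → V := fun n => if n < i₀ then γn n else γn (n + 1) with hδn
  have hDel : pathWeight (deleteVertex γ i₀) S =
      ((∏ j ∈ Finset.range (i₀ - 1), F j) *
        ⟪S (γn (i₀ - 1)), S (γn (i₀ + 1))⟫_ℂ) *
        ∏ j ∈ Finset.Ico (i₀ + 1) (m + 1), F j := by
    have hδ : ∀ j : Fin (m + 1), deleteVertex γ i₀ j = δn (j : ℕ) := by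
      intro j
      simp only [deleteVertex, hδn]
      by_cases h : (j : ℕ) < i₀
      · rw [if_pos h, if_pos h, hγn' j.castSucc, Fin.coe_castSucc]
      · rw [if_neg h, if_neg h, hγn' j.succ, Fin.val_succ]
    have h1 : pathWeight (deleteVertex γ i₀) S =
        ∏ j ∈ Finset.range m, ⟪S (δn j), S (δn (j + 1))⟫_ℂ := by
      rw [pathWeight, ← Fin.prod_univ_eq_prod_range]
      refine Finset.prod_congr rfl fun j _ => ?_
      rw [hδ j.castSucc, hδ j.succ, Fin.coe_castSucc, Fin.val_succ]
    rw [h1, split_prod' _ m i₀ h0 (by omega)]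
    congr 1
    congr 1
    · refine Finset.prod_congr rfl fun j hj => ?_
      simp only [Finset.mem_range] at hj
      simp only [hδn, if_pos (show j < i₀ by omega), if_pos (show j + 1 < i₀ by omega), hF]
    · simp only [hδn, if_pos (show i₀ - 1 < i₀ by omega), show i₀ - 1 + 1 = i₀ by omega,
        if_neg (lt_irrefl i₀)]
    · rw [Finset.prod_Ico_eq_prod_range, Finset.prod_Ico_eq_prod_range]
      rw [show m + 1 - (i₀ + 1) = m - i₀ by omega]
      refine Finset.prod_congr rfl fun t ht => ?_
      simp only [Finset.mem_range] at ht
      simp only [hδn, if_neg (show ¬ i₀ + t < i₀ by omega),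
        if_neg (show ¬ i₀ + t + 1 < i₀ by omega), hF]
      rw [show i₀ + 1 + t = i₀ + t + 1 by omega]
  -- assemble
  rw [hDel]
  rw [Finset.sum_congr rfl fun x _ => Finset.sum_congr rfl fun i _ => hPW (B x i)]
  have hsum : ∀ x : X,
      ∑ i : Fin p,
        ((∏ j ∈ Finset.range (i₀ - 1), F j) *
          (⟪S (γn (i₀ - 1)), B x i⟫_ℂ * ⟪B x i, S (γn (i₀ + 1))⟫_ℂ)) *
          ∏ j ∈ Finset.Ico (i₀ + 1) (m + 1), F j =
        ((∏ j ∈ Finset.range (i₀ - 1), F j) *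
          ⟪S (γn (i₀ - 1)), S (γn (i₀ + 1))⟫_ℂ) *
          ∏ j ∈ Finset.Ico (i₀ + 1) (m + 1), F j := by
    intro x
    rw [← Finset.sum_mul, ← Finset.mul_sum,
      (B x).sum_inner_mul_inner (S (γn (i₀ - 1))) (S (γn (i₀ + 1)))]
  rw [Finset.sum_congr rfl fun x _ => hsum x, Finset.sum_const, nsmul_eq_mul,
    Finset.card_univ]
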